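/- Every connected graph with n vertices and m edges has a bipartite subgraph with at least m/2 + (n−1)/4 edges. -/

import Mathlib

open Finset

namespace EdwardsErdos

variable {V : Type*} [DecidableEq V]

/-- Restriction of `G` to a finset `A`: vertices outside `A` become isolated. -/
def res (G : SimpleGraph V) (A : Finset V) : SimpleGraph V where
  Adj x y := G.Adj x y ∧ x ∈ A ∧ y ∈ A
  symm := ⟨fun x y ⟨h, hx, hy⟩ => ⟨h.symm, hy, hx⟩⟩
  loopless := ⟨fun x ⟨h, _, _⟩ => G.loopless.irrefl x h⟩

lemma res_adj {G : SimpleGraph V} {A : Finset V} {x y : V} :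
    (res G A).Adj x y ↔ G.Adj x y ∧ x ∈ A ∧ y ∈ A := Iff.rfl

lemma res_mono {G : SimpleGraph V} {A B : Finset V} (h : A ⊆ B) : res G A ≤ res G B :=
  fun _ _ ⟨ha, hx, hy⟩ => ⟨ha, h hx, h hy⟩

/-- `x` and `y` are joined by a walk staying inside `A`. -/
def ReachIn (G : SimpleGraph V) (A : Finset V) (x y : V) : Prop := (res G A).Reachable x y

/-- The graph restricted to `A` is connected (on `A`). -/
def ConnOn (G : SimpleGraph V) (A : Finset V) : Prop :=
  ∀ ⦃x⦄, x ∈ A → ∀ ⦃y⦄, y ∈ A → ReachIn G A x y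

variable {G : SimpleGraph V}

lemma walk_support_cases {A : Finset V} {x y : V} (W : (res G A).Walk x y) :
    ∀ z ∈ W.support, z ∈ A ∨ z = x := by
  induction W with
  | nil => intro z hz; simp only [SimpleGraph.Walk.support_nil, List.mem_singleton] at hz
           exact Or.inr hz
  | cons h p ih =>
    intro z hz
    rw [SimpleGraph.Walk.support_cons, List.mem_cons] at hz
    rcases hz with rfl | hz
    · exact Or.inl h.2.1
    · rcases ih z hz with h' | rfl
      · exact Or.inl h'
      · exact Or.inl h.2.2

lemma walk_transfer {A B : Finset V} {x y : V} (W : (res G A).Walk x y)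
    (h : ∀ z ∈ W.support, z ∈ B) : ReachIn G B x y := by
  induction W with
  | nil => exact SimpleGraph.Reachable.refl _
  | cons hadj p ih =>
    refine (SimpleGraph.Adj.reachable ?_).trans
      (ih (fun z hz => h z (by rw [SimpleGraph.Walk.support_cons]; exact List.mem_cons_of_mem _ hz)))
    exact ⟨hadj.1, h _ (SimpleGraph.Walk.start_mem_support _),
      h _ (by rw [SimpleGraph.Walk.support_cons]; exact List.mem_cons_of_mem _ p.start_mem_support)⟩

lemma ReachIn.mono {A B : Finset V} {x y : V} (h : A ⊆ B) (hr : ReachIn G A x y) :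
    ReachIn G B x y := SimpleGraph.Reachable.mono (res_mono h) hr

section Counting

variable [DecidableRel G.Adj]

/-- Number of neighbours of `u` inside `A`. -/
def degIn (G : SimpleGraph V) [DecidableRel G.Adj] (A : Finset V) (u : V) : ℕ :=
  #(A.filter (G.Adj u ·))

/-- Number of bichromatic neighbours of `u` inside `A`. -/
def cutD (G : SimpleGraph V) [DecidableRel G.Adj] (A : Finset V) (c : V → Bool) (u : V) : ℕ :=
  #(A.filter (fun y => G.Adj u y ∧ c u ≠ c y))

/-- Twice the number of edges inside `A`. -/
def E2 (G : SimpleGraph V) [DecidableRel G.Adj] (A : Finset V) : ℕ := ∑ x ∈ A, degIn G A x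

/-- Twice the number of bichromatic edges inside `A`. -/
def C2 (G : SimpleGraph V) [DecidableRel G.Adj] (A : Finset V) (c : V → Bool) : ℕ :=
  ∑ x ∈ A, cutD G A c x

lemma degIn_insert_self (B : Finset V) (u : V) : degIn G (insert u B) u = degIn G B u := by
  unfold degIn
  rw [filter_insert, if_neg (G.irrefl)]

lemma degIn_erase_self (B : Finset V) (u : V) : degIn G (B.erase u) u = degIn G B u := by
  unfold degIn
  rw [filter_erase, erase_eq_of_notMem]
  simp [G.irrefl]

lemma degIn_insert_other {B : Finset V} {u : V} (hu : u ∉ B) (x : V) :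
    degIn G (insert u B) x = degIn G B x + if G.Adj x u then 1 else 0 := by
  unfold degIn
  rw [filter_insert]
  split_ifs with h
  · rw [card_insert_of_notMem (fun hc => hu (mem_of_mem_filter _ hc))]
  · rfl

lemma E2_insert {B : Finset V} {u : V} (hu : u ∉ B) :
    E2 G (insert u B) = E2 G B + 2 * degIn G B u := by
  unfold E2
  rw [sum_insert hu, degIn_insert_self]
  have h1 : ∑ x ∈ B, degIn G (insert u B) x
      = ∑ x ∈ B, (degIn G B x + if G.Adj x u then 1 else 0) :=
    Finset.sum_congr rfl (fun x _ => degIn_insert_other hu x)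
  have h2 : ∑ x ∈ B, (if G.Adj x u then 1 else 0) = degIn G B u := by
    rw [← Finset.card_filter]
    unfold degIn
    congr 1
    apply filter_congr
    intro y _
    simp [G.adj_comm]
  rw [h1, Finset.sum_add_distrib, h2]
  omega

lemma cutD_insert_self (B : Finset V) (c : V → Bool) (u : V) :
    cutD G (insert u B) c u = cutD G B c u := by
  unfold cutD
  rw [filter_insert, if_neg (fun h => G.irrefl h.1)]

lemma cutD_insert_other {B : Finset V} {u : V} (hu : u ∉ B) (c : V → Bool) (x : V) :
    cutD G (insert u B) c x = cutD G B c x + if (G.Adj x u ∧ c x ≠ c u) then 1 else 0 := by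
  unfold cutD
  rw [filter_insert]
  split_ifs with h
  · rw [card_insert_of_notMem (fun hc => hu (mem_of_mem_filter _ hc))]
  · rfl

lemma C2_insert {B : Finset V} {u : V} (hu : u ∉ B) (c : V → Bool) :
    C2 G (insert u B) c = C2 G B c + 2 * cutD G B c u := by
  unfold C2
  rw [sum_insert hu, cutD_insert_self]
  have h1 : ∑ x ∈ B, cutD G (insert u B) c x
      = ∑ x ∈ B, (cutD G B c x + if (G.Adj x u ∧ c x ≠ c u) then 1 else 0) :=
    Finset.sum_congr rfl (fun x _ => cutD_insert_other hu c x)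
  have h2 : ∑ x ∈ B, (if (G.Adj x u ∧ c x ≠ c u) then 1 else 0) = cutD G B c u := by
    rw [← Finset.card_filter]
    unfold cutD
    congr 1
    apply filter_congr
    intro y _
    constructor
    · rintro ⟨h, hne⟩; exact ⟨h.symm, fun hh => hne hh.symm⟩
    · rintro ⟨h, hne⟩; exact ⟨h.symm, fun hh => hne hh.symm⟩
  rw [h1, Finset.sum_add_distrib, h2]
  omega

lemma C2_congr {A : Finset V} {c c' : V → Bool} (h : ∀ x ∈ A, c x = c' x) :
    C2 G A c = C2 G A c' := by
  unfold C2 cutD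
  refine Finset.sum_congr rfl (fun x hx => ?_)
  congr 1
  apply filter_congr
  intro y hy
  rw [h x hx, h y hy]

lemma exists_gain (B : Finset V) (u : V) (hu : u ∉ B) (c0 : V → Bool) :
    ∃ b : Bool, degIn G B u ≤ 2 * cutD G B (Function.update c0 u b) u ∧
      (Odd (degIn G B u) → degIn G B u + 1 ≤ 2 * cutD G B (Function.update c0 u b) u) := by
  have hc : ∀ b : Bool, cutD G B (Function.update c0 u b) u
      = #(B.filter (fun y => G.Adj u y ∧ b ≠ c0 y)) := by
    intro b
    unfold cutD
    congr 1
    apply filter_congr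
    intro y hy
    have hyu : y ≠ u := fun h => hu (h ▸ hy)
    rw [Function.update_self, Function.update_of_ne hyu]
  have hsum : #(B.filter (fun y => G.Adj u y ∧ true ≠ c0 y))
      + #(B.filter (fun y => G.Adj u y ∧ false ≠ c0 y)) = degIn G B u := by
    rw [← card_union_of_disjoint]
    · rw [← filter_or]
      unfold degIn
      congr 1
      apply filter_congr
      intro y _
      constructor
      · rintro (⟨h, _⟩ | ⟨h, _⟩) <;> exact h
      · intro h
        cases hcy : c0 y
        · exact Or.inl ⟨h, by simp [hcy]⟩
        · exact Or.inr ⟨h, by simp [hcy]⟩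
    · apply Finset.disjoint_filter_filter'
      rw [disjoint_iff_inf_le]
      rintro y ⟨⟨_, h1⟩, ⟨_, h2⟩⟩
      cases hcy : c0 y
      · exact h2 (by simp [hcy])
      · exact h1 (by simp [hcy])
  set ft := #(B.filter (fun y => G.Adj u y ∧ true ≠ c0 y)) with hft
  set ff := #(B.filter (fun y => G.Adj u y ∧ false ≠ c0 y)) with hff
  by_cases hbb : ff ≤ ft
  · refine ⟨true, ?_, ?_⟩
    · rw [hc]; omega
    · rw [hc]
      intro hodd
      have : degIn G B u ≠ 2 * ft := by
        intro h
        rw [h] at hodd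
        exact (Nat.not_odd_iff_even.mpr (even_two_mul ft)) hodd
      omega
  · refine ⟨false, ?_, ?_⟩
    · rw [hc]; omega
    · rw [hc]
      intro hodd
      have : degIn G B u ≠ 2 * ff := by
        intro h
        rw [h] at hodd
        exact (Nat.not_odd_iff_even.mpr (even_two_mul ff)) hodd
      omega

end Counting

section Structure

lemma exists_nbr {A : Finset V} (hA : ConnOn G A) {u : V} (hu : u ∈ A) (h2 : 2 ≤ A.card) :
    ∃ z ∈ A, G.Adj u z := by
  obtain ⟨y, hy, hne⟩ := Finset.exists_mem_ne (show 1 < #A by omega) u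
  obtain ⟨W⟩ := hA hu hy
  cases W with
  | nil => exact absurd rfl hne
  | cons h p => exact ⟨_, h.2.2, h.1⟩

lemma escape_aux {A D : Finset V} {w : V} (hwD : w ∉ D)
    (Q3 : ∀ u ∈ D, ∀ z ∈ A, G.Adj u z → z ∈ D ∨ z = w) :
    ∀ {t s : V}, ∀ (W : (res G A).Walk t s), t ∉ D → s = w → ReachIn G (A \ D) t w := by
  intro t s W
  induction W with
  | nil => rintro _ rfl; exact SimpleGraph.Reachable.refl _
  | @cons a b _ hadj p ih =>
    rintro haD rfl
    by_cases hbD : b ∈ D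
    · rcases Q3 b hbD a hadj.2.1 hadj.1.symm with h | h
      · exact absurd h haD
      · subst h; exact SimpleGraph.Reachable.refl _
    · refine (SimpleGraph.Adj.reachable ?_).trans (ih hbD rfl)
      exact ⟨hadj.1, mem_sdiff.mpr ⟨hadj.2.1, haD⟩, mem_sdiff.mpr ⟨hadj.2.2, hbD⟩⟩

lemma escape {A D : Finset V} {w : V} (hwD : w ∉ D)
    (Q3 : ∀ u ∈ D, ∀ z ∈ A, G.Adj u z → z ∈ D ∨ z = w)
    {t : V} (W : (res G A).Walk t w) (ht : t ∉ D) : ReachIn G (A \ D) t w :=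
  escape_aux hwD Q3 W ht rfl

lemma exists_wD {A : Finset V} (hA : ConnOn G A) (h2 : 2 ≤ A.card) :
    ∃ w ∈ A, ∃ D : Finset V, D ⊆ A.erase w ∧ D.Nonempty ∧
      (∀ y ∈ D, ConnOn G (A.erase y)) ∧
      (∀ u ∈ D, ∀ z ∈ A, G.Adj u z → z ∈ D ∨ z = w) := by
  classical
  by_cases hnc : ∀ y ∈ A, ConnOn G (A.erase y)
  · obtain ⟨w, hw⟩ : A.Nonempty := card_pos.mp (by omega)
    refine ⟨w, hw, A.erase w, Finset.Subset.refl _, ?_, ?_, ?_⟩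
    · rw [← card_pos, card_erase_of_mem hw]; omega
    · intro y hy; exact hnc y (mem_of_mem_erase hy)
    · intro u _ z hz _
      by_cases hzw : z = w
      · exact Or.inr hzw
      · exact Or.inl (mem_erase.mpr ⟨hzw, hz⟩)
  · push_neg at hnc
    obtain ⟨w0, hw0A, hw0⟩ := hnc
    have hPne : ((A ×ˢ A).filter
        (fun p => p.2 ∈ A.erase p.1 ∧ ∃ z ∈ A.erase p.1,
          ¬ ReachIn G (A.erase p.1) p.2 z)).Nonempty := by
      rw [ConnOn] at hw0; push_neg at hw0
      obtain ⟨a, ha, b, hb, hab⟩ := hw0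
      exact ⟨(w0, a), by
        rw [mem_filter, mem_product]
        exact ⟨⟨hw0A, mem_of_mem_erase ha⟩, ha, b, hb, hab⟩⟩
    obtain ⟨⟨w, y0⟩, hp0, hmin⟩ := Finset.exists_min_image _
      (fun p => #((A.erase p.1).filter (fun t => ReachIn G (A.erase p.1) p.2 t))) hPne
    rw [mem_filter, mem_product] at hp0
    obtain ⟨⟨hwA, -⟩, hy0, -⟩ := hp0
    set D : Finset V := (A.erase w).filter (fun t => ReachIn G (A.erase w) y0 t) with hD
    have hDsub : D ⊆ A.erase w := filter_subset _ _
    have hwD : w ∉ D := fun h => notMem_erase w A (hDsub h)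
    have hy0D : y0 ∈ D := by
      rw [hD, mem_filter]; exact ⟨hy0, SimpleGraph.Reachable.refl _⟩
    have hQ3 : ∀ u ∈ D, ∀ z ∈ A, G.Adj u z → z ∈ D ∨ z = w := by
      intro u hu z hz hadj
      by_cases hzw : z = w
      · exact Or.inr hzw
      · left
        rw [hD, mem_filter] at hu ⊢
        refine ⟨mem_erase.mpr ⟨hzw, hz⟩, hu.2.trans (SimpleGraph.Adj.reachable ?_)⟩
        exact ⟨hadj, hu.1, mem_erase.mpr ⟨hzw, hz⟩⟩
    refine ⟨w, hwA, D, hDsub, ⟨y0, hy0D⟩, ?_, hQ3⟩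
    intro y hyD
    by_contra hcy
    have hyA : y ∈ A := mem_of_mem_erase (hDsub hyD)
    have hyw : y ≠ w := (mem_erase.mp (hDsub hyD)).1
    have hwAy : w ∈ A.erase y := mem_erase.mpr ⟨fun h => hyw h.symm, hwA⟩
    have hzstar : ∃ z ∈ A.erase y, ¬ ReachIn G (A.erase y) z w := by
      rw [ConnOn] at hcy; push_neg at hcy
      obtain ⟨a, ha, b, hb, hab⟩ := hcy
      by_cases haw : ReachIn G (A.erase y) a w
      · exact ⟨b, hb, fun hbw => hab (haw.trans hbw.symm)⟩
      · exact ⟨a, ha, haw⟩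
    obtain ⟨z, hzAy, hzw⟩ := hzstar
    have hyP : (y, z) ∈ (A ×ˢ A).filter
        (fun p => p.2 ∈ A.erase p.1 ∧ ∃ z' ∈ A.erase p.1,
          ¬ ReachIn G (A.erase p.1) p.2 z') := by
      rw [mem_filter, mem_product]
      exact ⟨⟨hyA, mem_of_mem_erase hzAy⟩, hzAy, w, hwAy, hzw⟩
    have hminD := hmin (y, z) hyP
    have hsub2 : ((A.erase y).filter (fun t => ReachIn G (A.erase y) z t)) ⊆ D.erase y := by
      intro t ht
      rw [mem_filter] at ht
      obtain ⟨htAy, hzt⟩ := ht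
      have hty : t ≠ y := (mem_erase.mp htAy).1
      have htw : ¬ ReachIn G (A.erase y) t w := fun h => hzw (hzt.trans h)
      have htD : t ∈ D := by
        by_contra htD
        obtain ⟨Wt⟩ := hA (mem_of_mem_erase htAy) hwA
        have hesc := escape hwD hQ3 Wt htD
        have hsubAy : A \ D ⊆ A.erase y := by
          intro a ha
          rw [mem_sdiff] at ha
          exact mem_erase.mpr ⟨fun h => ha.2 (h ▸ hyD), ha.1⟩
        exact htw (hesc.mono hsubAy)
      exact mem_erase.mpr ⟨hty, htD⟩
    have hlt : #((A.erase y).filter (fun t => ReachIn G (A.erase y) z t)) < #D :=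
      lt_of_le_of_lt (card_le_card hsub2) (card_erase_lt_of_mem hyD)
    simp only at hminD
    omega

lemma walk_head_decomp {G' : SimpleGraph V} {u y : V} (R : G'.Walk u y) (hne : u ≠ y) :
    ∃ z, ∃ (_ : G'.Adj u z) (Q : G'.Walk z y), R.support = u :: Q.support := by
  cases R with
  | nil => exact absurd rfl hne
  | cons h q => exact ⟨_, h, q, by simp⟩

variable [DecidableRel G.Adj]

lemma key_aux {A : Finset V} (hA : ConnOn G A) (h2 : 2 ≤ A.card)
    (heven : ∀ u ∈ A, ConnOn G (A.erase u) → Even (degIn G A u))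
    {w : V} {D : Finset V} (hwA : w ∈ A) (hDsub : D ⊆ A.erase w) (hDne : D.Nonempty)
    (Q2 : ∀ y ∈ D, ConnOn G (A.erase y))
    (Q3 : ∀ u ∈ D, ∀ z ∈ A, G.Adj u z → z ∈ D ∨ z = w) :
    ∃ u ∈ A, ∃ v ∈ A, G.Adj u v ∧ ConnOn G ((A.erase u).erase v) ∧ Even (degIn G A v) := by
  classical
  obtain ⟨u, huD⟩ := hDne
  have huAw : u ∈ A.erase w := hDsub huD
  have huA : u ∈ A := mem_of_mem_erase huAw
  have huw : u ≠ w := (mem_erase.mp huAw).1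
  have hconnU : ConnOn G (A.erase u) := Q2 u huD
  have hevenU : Even (degIn G A u) := heven u huA hconnU
  obtain ⟨z0, hz0A, hz0adj⟩ := exists_nbr hA huA h2
  have hdeg1 : 1 ≤ degIn G A u := card_pos.mpr ⟨z0, mem_filter.mpr ⟨hz0A, hz0adj⟩⟩
  have hdeg2 : 2 ≤ degIn G A u := by
    rcases hevenU with ⟨k, hk⟩
    omega
  obtain ⟨v0, hv0, hv0w⟩ := Finset.exists_mem_ne
    (show 1 < #(A.filter (G.Adj u ·)) from hdeg2) w
  have hNne : (D.filter (G.Adj u ·)).Nonempty := by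
    have hm := mem_filter.mp hv0
    rcases Q3 u huD v0 hm.1 hm.2 with h | h
    · exact ⟨v0, mem_filter.mpr ⟨h, hm.2⟩⟩
    · exact absurd h hv0w
  obtain ⟨v, hvN, hvmax⟩ := Finset.exists_max_image _
    (fun t => (res G (A.erase u)).dist w t) hNne
  obtain ⟨hvD, hadjuv⟩ := mem_filter.mp hvN
  have hvA : v ∈ A := mem_of_mem_erase (hDsub hvD)
  have hvw : v ≠ w := (mem_erase.mp (hDsub hvD)).1
  have hvu : v ≠ u := hadjuv.ne'
  have hwAu : w ∈ A.erase u := mem_erase.mpr ⟨fun h => huw h.symm, hwA⟩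
  have hwA2 : w ∈ (A.erase u).erase v := mem_erase.mpr ⟨fun h => hvw h.symm, hwAu⟩
  have main : ∀ y ∈ (A.erase u).erase v, ReachIn G ((A.erase u).erase v) y w := by
    intro y hy
    by_contra hyw
    have hyA : y ∈ A := mem_of_mem_erase (mem_of_mem_erase hy)
    have hyv : y ≠ v := (mem_erase.mp hy).1
    have hyu : y ≠ u := (mem_erase.mp (mem_of_mem_erase hy)).1
    have hyAv : y ∈ A.erase v := mem_erase.mpr ⟨hyv, hyA⟩
    have hwAv : w ∈ A.erase v := mem_erase.mpr ⟨fun h => hvw h.symm, hwA⟩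
    obtain ⟨W⟩ := Q2 v hvD hyAv hwAv
    have husupp : u ∈ W.support := by
      by_contra husupp
      refine hyw (walk_transfer W ?_)
      intro t ht
      rcases walk_support_cases W t ht with h | rfl
      · exact mem_erase.mpr ⟨(mem_erase.mp h).1,
          mem_erase.mpr ⟨fun he => husupp (he ▸ ht), (mem_erase.mp h).2⟩⟩
      · exact mem_erase.mpr ⟨hyv, mem_erase.mpr ⟨hyu, hyA⟩⟩
    have hcountR : (W.takeUntil u husupp).reverse.support.count u = 1 := by
      rw [SimpleGraph.Walk.support_reverse, List.count_reverse]
      exact W.count_support_takeUntil_eq_one husupp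
    obtain ⟨z, hadj', Q, hQsupp⟩ :=
      walk_head_decomp ((W.takeUntil u husupp).reverse) (fun h => hyu h.symm)
    have huQ : u ∉ Q.support := by
      rw [hQsupp, List.count_cons_self] at hcountR
      exact List.count_eq_zero.mp (by omega)
    have hz1 : G.Adj u z := hadj'.1
    have hzAv : z ∈ A.erase v := hadj'.2.2
    have hzA'' : z ∈ (A.erase u).erase v := mem_erase.mpr ⟨(mem_erase.mp hzAv).1,
      mem_erase.mpr ⟨hz1.ne', (mem_erase.mp hzAv).2⟩⟩
    have hzy : ReachIn G ((A.erase u).erase v) z y := by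
      refine walk_transfer Q ?_
      intro t ht
      have htu : t ≠ u := fun he => huQ (he ▸ ht)
      rcases walk_support_cases Q t ht with h | rfl
      · exact mem_erase.mpr ⟨(mem_erase.mp h).1, mem_erase.mpr ⟨htu, (mem_erase.mp h).2⟩⟩
      · exact hzA''
    have hzw : ¬ ReachIn G ((A.erase u).erase v) z w := fun h => hyw (hzy.symm.trans h)
    have hzD : z ∈ D := by
      rcases Q3 u huD z (mem_of_mem_erase hzAv) hz1 with h | rfl
      · exact h
      · exact absurd (SimpleGraph.Reachable.refl _) hzw
    have hreach : (res G (A.erase u)).Reachable w z :=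
      hconnU hwAu (mem_erase.mpr ⟨hz1.ne', mem_of_mem_erase hzAv⟩)
    obtain ⟨Ws, hWs⟩ := hreach.exists_walk_length_eq_dist
    have hvsupp : v ∈ Ws.support := by
      by_contra hvs
      have hr : ReachIn G ((A.erase u).erase v) w z := by
        refine walk_transfer Ws ?_
        intro t ht
        rcases walk_support_cases Ws t ht with h | rfl
        · exact mem_erase.mpr ⟨fun he => hvs (he ▸ ht), h⟩
        · exact hwA2
      exact hzw hr.symm
    have hlen : Ws.length = (Ws.takeUntil v hvsupp).length + (Ws.dropUntil v hvsupp).length := by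
      rw [← SimpleGraph.Walk.length_append, SimpleGraph.Walk.take_spec]
    have hd1 : (res G (A.erase u)).dist w v ≤ (Ws.takeUntil v hvsupp).length :=
      SimpleGraph.dist_le _
    have hd2 : 1 ≤ (Ws.dropUntil v hvsupp).length := by
      by_contra hzero
      push_neg at hzero
      have h0 : (Ws.dropUntil v hvsupp).length = 0 := by omega
      have : v = z := SimpleGraph.Walk.eq_of_length_eq_zero h0
      exact (mem_erase.mp hzA'').1 this.symm
    have hle := hvmax z (mem_filter.mpr ⟨hzD, hz1⟩)
    rw [← hWs] at hle
    omega
  refine ⟨u, huA, v, hvA, hadjuv, ?_, heven v hvA (Q2 v hvD)⟩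
  intro x hx y hy
  exact (main x hx).trans (main y hy).symm

lemma key {A : Finset V} (hA : ConnOn G A) (h2 : 2 ≤ A.card) :
    (∃ u ∈ A, ConnOn G (A.erase u) ∧ Odd (degIn G A u)) ∨
    (∃ u ∈ A, ∃ v ∈ A, G.Adj u v ∧ ConnOn G ((A.erase u).erase v) ∧ Even (degIn G A v)) := by
  classical
  by_cases hodd : ∃ u ∈ A, ConnOn G (A.erase u) ∧ Odd (degIn G A u)
  · exact Or.inl hodd
  · right
    push_neg at hodd
    have heven : ∀ u ∈ A, ConnOn G (A.erase u) → Even (degIn G A u) := fun u hu hc =>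
      Nat.not_odd_iff_even.mp (hodd u hu hc)
    obtain ⟨w, hwA, D, hDsub, hDne, Q2, Q3⟩ := exists_wD hA h2
    exact key_aux hA h2 heven hwA hDsub hDne Q2 Q3

theorem main_ineq : ∀ A : Finset V, A.Nonempty → ConnOn G A →
    ∃ c : V → Bool, E2 G A + #A ≤ 2 * C2 G A c + 1 := by
  intro A
  induction A using Finset.strongInduction with
  | _ A ih =>
    intro hne hA
    by_cases h1 : #A ≤ 1
    · refine ⟨fun _ => true, ?_⟩
      obtain ⟨a, rfl⟩ := Finset.card_eq_one.mp (le_antisymm h1 (card_pos.mpr hne))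
      have hE0 : E2 G {a} = 0 := by
        unfold E2 degIn
        rw [Finset.sum_singleton, Finset.filter_singleton, if_neg (G.loopless.irrefl a), card_empty]
      have hcs : #({a} : Finset V) = 1 := card_singleton a
      omega
    · push_neg at h1
      have h2 : 2 ≤ #A := h1
      rcases key hA h2 with ⟨u, huA, hconn', hodd⟩ | ⟨u, huA, v, hvA, hadj, hconn'', hevenv⟩
      · -- remove a single vertex of odd degree
        have hBne : (A.erase u).Nonempty := by
          rw [← card_pos, card_erase_of_mem huA]; omega
        obtain ⟨c0, hc0⟩ := ih (A.erase u) (erase_ssubset huA) hBne hconn'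
        have huB : u ∉ A.erase u := notMem_erase u A
        obtain ⟨b, _, hb2⟩ := exists_gain (G := G) (A.erase u) u huB c0
        set c := Function.update c0 u b with hc
        refine ⟨c, ?_⟩
        have hins : insert u (A.erase u) = A := insert_erase huA
        have hdegu : degIn G (A.erase u) u = degIn G A u := degIn_erase_self A u
        have hoddB : Odd (degIn G (A.erase u) u) := hdegu ▸ hodd
        have hb2' := hb2 hoddB
        have hE := E2_insert (G := G) huB
        rw [hins] at hE
        have hC := C2_insert (G := G) huB c
        rw [hins] at hC
        have hcg : C2 G (A.erase u) c = C2 G (A.erase u) c0 :=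
          C2_congr (fun x hx => Function.update_of_ne (mem_erase.mp hx).1 _ _)
        have hcard : #(A.erase u) + 1 = #A := card_erase_add_one huA
        omega
      · -- remove two adjacent vertices u, v with v of even degree
        have humem : u ∈ A.filter (G.Adj v ·) := mem_filter.mpr ⟨huA, hadj.symm⟩
        have hdegv1 : 1 ≤ degIn G A v := card_pos.mpr ⟨u, humem⟩
        have hdegv2 : 2 ≤ degIn G A v := by
          rcases hevenv with ⟨k, hk⟩; omega
        obtain ⟨z, hz, hzu⟩ := Finset.exists_mem_ne
          (show 1 < #(A.filter (G.Adj v ·)) from hdegv2) u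
        have hz' := mem_filter.mp hz
        have hzv : z ≠ v := (hz'.2).ne'
        have hzA'' : z ∈ (A.erase u).erase v :=
          mem_erase.mpr ⟨hzv, mem_erase.mpr ⟨hzu, hz'.1⟩⟩
        have hA''ne : ((A.erase u).erase v).Nonempty := ⟨z, hzA''⟩
        have hss : (A.erase u).erase v ⊂ A :=
          lt_of_le_of_lt (erase_subset _ _) (erase_ssubset huA)
        obtain ⟨c0, hc0⟩ := ih _ hss hA''ne hconn''
        have hvB : v ∉ (A.erase u).erase v := notMem_erase _ _
        obtain ⟨bv, _, hbv⟩ := exists_gain (G := G) ((A.erase u).erase v) v hvB c0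
        set c1 := Function.update c0 v bv with hc1
        have huB : u ∉ A.erase u := notMem_erase _ _
        obtain ⟨bu, hbu, _⟩ := exists_gain (G := G) (A.erase u) u huB c1
        set c := Function.update c1 u bu with hc
        refine ⟨c, ?_⟩
        have hvAu : v ∈ A.erase u := mem_erase.mpr ⟨hadj.ne', hvA⟩
        have hins1 : insert v ((A.erase u).erase v) = A.erase u := insert_erase hvAu
        have hins2 : insert u (A.erase u) = A := insert_erase huA
        have hdv : degIn G ((A.erase u).erase v) v = degIn G (A.erase u) v :=
          degIn_erase_self (A.erase u) v
        have h3 : degIn G (A.erase u) v + 1 = degIn G A v := by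
          unfold degIn
          rw [filter_erase]
          exact card_erase_add_one humem
        have hdvodd : Odd (degIn G ((A.erase u).erase v) v) := by
          rw [hdv]
          rcases hevenv with ⟨k, hk⟩
          exact ⟨k - 1, by omega⟩
        have hbv2 := hbv hdvodd
        have hE1 := E2_insert (G := G) hvB
        rw [hins1] at hE1
        have hE2 := E2_insert (G := G) huB
        rw [hins2] at hE2
        have hC1 := C2_insert (G := G) hvB c1
        rw [hins1] at hC1
        have hC2 := C2_insert (G := G) huB c
        rw [hins2] at hC2
        have hcg1 : C2 G ((A.erase u).erase v) c1 = C2 G ((A.erase u).erase v) c0 :=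
          C2_congr (fun x hx => Function.update_of_ne (mem_erase.mp hx).1 _ _)
        have hcg2 : C2 G (A.erase u) c = C2 G (A.erase u) c1 :=
          C2_congr (fun x hx => Function.update_of_ne (mem_erase.mp hx).1 _ _)
        have hcard1 : #((A.erase u).erase v) + 1 = #(A.erase u) := card_erase_add_one hvAu
        have hcard2 : #(A.erase u) + 1 = #A := card_erase_add_one huA
        have hdvv : degIn G ((A.erase u).erase v) v = degIn G (A.erase u) v := hdv
        omega

end Structure

end EdwardsErdos

/-- Edwards–Erdős bound: every connected graph with `n` vertices and `m` edges
has a bipartite subgraph with at least `m/2 + (n−1)/4` edges. -/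
theorem edwards_erdos {V : Type*} [Fintype V] (G : SimpleGraph V)
    (hconn : G.Connected) :
    ∃ H : SimpleGraph V, H ≤ G ∧ H.Colorable 2 ∧
      (G.edgeSet.ncard : ℝ) / 2 + ((Fintype.card V : ℝ) - 1) / 4 ≤
        (H.edgeSet.ncard : ℝ) := by
  classical
  open EdwardsErdos in
  have hres : res G Finset.univ = G := by
    ext a b
    simp [res_adj]
  have hNE : Nonempty V := hconn.nonempty
  have hconnOn : ConnOn G Finset.univ := by
    intro x _ y _
    rw [ReachIn, hres]
    exact hconn x y
  obtain ⟨c, hc⟩ := main_ineq (G := G) Finset.univ Finset.univ_nonempty hconnOn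
  set H : SimpleGraph V :=
    { Adj := fun a b => G.Adj a b ∧ c a ≠ c b
      symm := ⟨fun a b ⟨h, hne⟩ => ⟨h.symm, fun he => hne he.symm⟩⟩
      loopless := ⟨fun a ⟨h, _⟩ => G.irrefl h⟩ } with hH
  have hle : H ≤ G := fun {a b} hab => hab.1
  have hcol : H.Colorable 2 := by
    refine ⟨SimpleGraph.Coloring.mk (fun v => if c v then 0 else 1) ?_⟩
    intro a b hab
    have := hab.2
    cases hca : c a <;> cases hcb : c b <;> simp_all
  -- edge counts
  have hE : E2 G Finset.univ = 2 * #G.edgeFinset := by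
    rw [← SimpleGraph.sum_degrees_eq_twice_card_edges]
    refine Finset.sum_congr rfl (fun x _ => ?_)
    rw [← SimpleGraph.card_neighborFinset_eq_degree, SimpleGraph.neighborFinset_eq_filter]
    rfl
  have hC : C2 G Finset.univ c = 2 * #H.edgeFinset := by
    rw [← SimpleGraph.sum_degrees_eq_twice_card_edges]
    refine Finset.sum_congr rfl (fun x _ => ?_)
    rw [← SimpleGraph.card_neighborFinset_eq_degree, SimpleGraph.neighborFinset_eq_filter]
    rfl
  have hGn : (G.edgeSet.ncard : ℝ) = (#G.edgeFinset : ℝ) := by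
    rw [← SimpleGraph.coe_edgeFinset, Set.ncard_coe_finset]
  have hHn : (H.edgeSet.ncard : ℝ) = (#H.edgeFinset : ℝ) := by
    rw [← SimpleGraph.coe_edgeFinset, Set.ncard_coe_finset]
  have hcard : #(Finset.univ : Finset V) = Fintype.card V := rfl
  refine ⟨H, hle, hcol, ?_⟩
  rw [hGn, hHn]
  rw [hE, hC, hcard] at hc
  have hreal : (2 * #G.edgeFinset + Fintype.card V : ℝ) ≤ 2 * (2 * #H.edgeFinset) + 1 := by
    exact_mod_cast hc
  linarith
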